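/- Let F be the linear map on matrices defined by F(X) = Unv((I_{K1} ⊗ L_{K2 J1} ⊗ I_{J2}) Vec(X^T), J1 J2, K1 K2) for X ∈ ℝ^{J1 K1 × J2 K2}, where Unv(v, m, n) reshapes a vector of length mn into an m×n matrix column-wise. Then F is a linear bijection from ℝ^{J1 K1 × J2 K2} to ℝ^{J1 J2 × K1 K2}, and for all M1 ∈ ℝ^{J1×K1}, M2 ∈ ℝ^{J2×K2} it satisfies F(Vec(M1) Vec(M2)^T) = M1 ⊗ M2. -/

import Mathlib

open Matrix Kronecker

noncomputable section

/-- Column-stacking vectorization: `vec A (j, i) = A i j`. -/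
def vec {m n : Type*} (A : Matrix m n ℝ) : n × m → ℝ := fun p => A p.2 p.1

/-- The commutation matrix `L_{α,β}` satisfying `(commMat α β).mulVec (vec A) = vec Aᵀ`. -/
def commMat (α β : Type*) [DecidableEq α] [DecidableEq β] : Matrix (α × β) (β × α) ℝ :=
  fun p q => if p.1 = q.2 ∧ p.2 = q.1 then 1 else 0

/-- The rearrangement map `F(X) = Unv((I_{K1} ⊗ L_{K2 J1} ⊗ I_{J2}) Vec(Xᵀ), J1 J2, K1 K2)`.
Here `ℝ^{J1 K1 × J2 K2}` is represented (column-major) as `Matrix (K1 × J1) (K2 × J2) ℝ`,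
`ℝ^{J1 J2 × K1 K2}` as `Matrix (J1 × J2) (K1 × K2) ℝ`, and the `Unv` reshaping (also
column-major) reads the output entry `(j1,j2),(k1,k2)` off position `((k1,(k2,j1)),j2)` of
the vector `(I_{K1} ⊗ L_{K2 J1} ⊗ I_{J2}) Vec(Xᵀ)`. -/
def Fmap {J1 K1 J2 K2 : Type*}
    [Fintype J1] [Fintype K1] [Fintype J2] [Fintype K2]
    [DecidableEq J1] [DecidableEq K1] [DecidableEq J2] [DecidableEq K2]
    (X : Matrix (K1 × J1) (K2 × J2) ℝ) : Matrix (J1 × J2) (K1 × K2) ℝ :=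
  Matrix.of fun jp kp =>
    ((((1 : Matrix K1 K1 ℝ) ⊗ₖ commMat K2 J1) ⊗ₖ (1 : Matrix J2 J2 ℝ)).mulVec
      (fun q => _root_.vec Xᵀ ((q.1.1, q.1.2.1), (q.1.2.2, q.2))))
      ((kp.1, (kp.2, jp.1)), jp.2)


lemma Fmap_apply {J1 K1 J2 K2 : Type*}
    [Fintype J1] [Fintype K1] [Fintype J2] [Fintype K2]
    [DecidableEq J1] [DecidableEq K1] [DecidableEq J2] [DecidableEq K2]
    (X : Matrix (K1 × J1) (K2 × J2) ℝ) (jp : J1 × J2) (kp : K1 × K2) :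
    Fmap X jp kp = X (kp.1, jp.1) (kp.2, jp.2) := by
  simp only [Fmap, Matrix.of_apply, Matrix.mulVec, dotProduct, Matrix.kroneckerMap_apply,
    commMat, Matrix.one_apply, _root_.vec, Matrix.transpose_apply]
  rw [Finset.sum_eq_single ((kp.1, (jp.1, kp.2)), jp.2)]
  · simp
  · rintro ⟨⟨a, b, c⟩, d⟩ _ h
    by_cases h1 : kp.1 = a <;> by_cases h2 : kp.2 = c <;> by_cases h3 : jp.1 = b <;>
      by_cases h4 : jp.2 = d <;> simp_all
  · simp

/-- `F` is a linear bijection from `ℝ^{J1 K1 × J2 K2}` to `ℝ^{J1 J2 × K1 K2}`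
and satisfies `F(Vec(M1) Vec(M2)ᵀ) = M1 ⊗ M2` for all `M1 ∈ ℝ^{J1×K1}`, `M2 ∈ ℝ^{J2×K2}`. -/
theorem Fmap_linear_bijective_kron {J1 K1 J2 K2 : Type*}
    [Fintype J1] [Fintype K1] [Fintype J2] [Fintype K2]
    [DecidableEq J1] [DecidableEq K1] [DecidableEq J2] [DecidableEq K2] :
    IsLinearMap ℝ (Fmap (J1 := J1) (K1 := K1) (J2 := J2) (K2 := K2)) ∧
    Function.Bijective (Fmap (J1 := J1) (K1 := K1) (J2 := J2) (K2 := K2)) ∧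
    ∀ (M1 : Matrix J1 K1 ℝ) (M2 : Matrix J2 K2 ℝ),
      Fmap (Matrix.of fun p q => _root_.vec M1 p * _root_.vec M2 q) = M1 ⊗ₖ M2 := by
  refine ⟨⟨fun X Y => ?_, fun c X => ?_⟩, ?_, fun M1 M2 => ?_⟩
  · ext jp kp; simp [Fmap_apply, Matrix.add_apply]
  · ext jp kp; simp [Fmap_apply, Matrix.smul_apply]
  · constructor
    · intro X Y h
      ext ⟨k1, j1⟩ ⟨k2, j2⟩
      have := congrFun (congrFun h (j1, j2)) (k1, k2)
      simpa [Fmap_apply] using this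
    · intro Y
      refine ⟨Matrix.of fun p q => Y (p.2, q.2) (p.1, q.1), ?_⟩
      ext ⟨j1, j2⟩ ⟨k1, k2⟩
      simp [Fmap_apply]
  · ext ⟨j1, j2⟩ ⟨k1, k2⟩
    simp [Fmap_apply, _root_.vec, Matrix.kroneckerMap_apply]
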